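/- Fix m ∈ ℕ and define recursively T_1 := κ_m and, for j ≥ 1, T_{j+1} := κ_{T_j + 1} on the event {T_j < ∞} and T_{j+1} := ∞ otherwise. Then for every k ≥ 1, ℙ(T_k < ∞) ≤ ℙ(κ_0 < ∞)^k. -/

import Mathlib

open MeasureTheory ProbabilityTheory Set Filter

/-- Fix `m` and define recursively `T 1 := κ m` and, for `j ≥ 1`,
`T (j+1) := κ (T j + 1)` on the event `{T j < ∞}` and `T (j+1) := ∞` otherwise.
Then for every `k ≥ 1`, `ℙ(T k < ∞) ≤ ℙ(κ 0 < ∞) ^ k`. -/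
theorem renewal_iterated_stopping_bound
    {Ω E : Type*} {mΩ : MeasurableSpace Ω} [MeasurableSpace E]
    (μ : Measure Ω) [IsProbabilityMeasure μ]
    (ℱ : Filtration ℕ mΩ)
    (κ : ℕ → Ω → ℕ∞) (Y : ℕ → Ω → E)
    (hκ_stop : ∀ i n : ℕ, MeasurableSet[ℱ n] {ω | κ i ω ≤ (n : ℕ∞)})
    (hY_adapted : ∀ n : ℕ, Measurable[ℱ n] (Y n))
    (h_i : ∀ (n : ℕ) (ω : Ω), (n : ℕ∞) ≤ κ n ω)
    (h_ii : ∀ (m n : ℕ) (ω : Ω), m < n → (n : ℕ∞) ≤ κ m ω → κ n ω ≤ κ m ω)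
    (h_iii : ∀ g : (ℕ → E × ℕ∞) → ℝ, Measurable g → (∃ Cg : ℝ, ∀ x, |g x| ≤ Cg) →
      ∀ n : ℕ, 1 ≤ n →
      μ[fun ω => g (fun k => (Y (n + k) ω, κ (n + k) ω - ((n + k : ℕ) : ℕ∞)))
            * ({ω' | κ n ω' = ⊤}.indicator (fun _ => (1 : ℝ)) ω) | ℱ (n - 1)]
        =ᵐ[μ] fun _ => ∫ ω, g (fun k => (Y k ω, κ k ω - ((k : ℕ) : ℕ∞)))
            * ({ω' | κ 0 ω' = ⊤}.indicator (fun _ => (1 : ℝ)) ω) ∂μ)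
    (h_iv : 0 < μ {ω | κ 0 ω = ⊤})
    (m : ℕ) (T : ℕ → Ω → ℕ∞)
    (hT1 : ∀ ω, T 1 ω = κ m ω)
    (hTrec : ∀ j : ℕ, 1 ≤ j → ∀ ω,
      T (j + 1) ω = if T j ω = ⊤ then ⊤ else κ ((T j ω).toNat + 1) ω) :
    ∀ k : ℕ, 1 ≤ k → μ {ω | T k ω < ⊤} ≤ μ {ω | κ 0 ω < ⊤} ^ k := by
  set p : ENNReal := μ {ω | κ 0 ω < ⊤} with hp
  set q : ENNReal := μ {ω | κ 0 ω = ⊤} with hq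
  -- measurability of {κ i = ⊤}
  have hκtop : ∀ i : ℕ, MeasurableSet {ω | κ i ω = ⊤} := by
    intro i
    have : {ω | κ i ω = ⊤} = ⋂ t : ℕ, {ω | κ i ω ≤ (t : ℕ∞)}ᶜ := by
      ext ω
      simp only [mem_iInter, mem_compl_iff, mem_setOf_eq]
      constructor
      · rintro h t hle; rw [h] at hle; simp at hle
      · intro h
        by_contra hne
        exact h (κ i ω).toNat (le_of_eq (ENat.coe_toNat hne).symm)
    rw [this]
    exact MeasurableSet.iInter fun t => (ℱ.le t _ (hκ_stop i t)).compl
  -- measurability of {κ i = t} in ℱ t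
  have hκeq : ∀ i t : ℕ, MeasurableSet[ℱ t] {ω | κ i ω = (t : ℕ∞)} := by
    intro i t
    cases t with
    | zero =>
      have h0 : {ω | κ i ω = ((0 : ℕ) : ℕ∞)} = {ω | κ i ω ≤ ((0 : ℕ) : ℕ∞)} := by
        ext ω
        simp only [mem_setOf_eq, Nat.cast_zero]
        exact ⟨fun h => h.le, fun h => le_antisymm h zero_le⟩
      rw [h0]; exact hκ_stop i 0
    | succ t =>
      have h0 : {ω | κ i ω = (↑(t + 1) : ℕ∞)}
          = {ω | κ i ω ≤ (↑(t + 1) : ℕ∞)} ∩ {ω | κ i ω ≤ (t : ℕ∞)}ᶜ := by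
        ext ω
        simp only [mem_inter_iff, mem_compl_iff, mem_setOf_eq]
        induction κ i ω using ENat.recTopCoe with
        | top => simp; exact fun h => ENat.coe_ne_top (t + 1) (by exact_mod_cast h.symm)
        | coe s => norm_cast; omega
      rw [h0]
      exact (hκ_stop i (t + 1)).inter
        ((ℱ.mono (Nat.le_succ t) _ (hκ_stop i t)).compl)
  -- Lemma A
  have hcond : ∀ n : ℕ, 1 ≤ n → ∀ A : Set Ω, MeasurableSet[ℱ (n - 1)] A →
      μ (A ∩ {ω | κ n ω = ⊤}) = μ A * q := by
    intro n hn A hA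
    have hg := h_iii (fun _ => 1) measurable_const ⟨1, fun x => by simp⟩ n hn
    simp only [one_mul] at hg
    have hAm : MeasurableSet A := ℱ.le _ _ hA
    have hf_int : Integrable ({ω' | κ n ω' = ⊤}.indicator (fun _ => (1 : ℝ))) μ :=
      (integrable_const (1 : ℝ)).indicator (hκtop n)
    have h1 : ∫ ω in A, ({ω' | κ n ω' = ⊤}.indicator (fun _ => (1 : ℝ))) ω ∂μ
        = (μ (A ∩ {ω | κ n ω = ⊤})).toReal := by
      rw [setIntegral_indicator (hκtop n)]
      simp [Measure.restrict_apply hAm]; rfl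
    have h2 : ∫ ω, ({ω' | κ 0 ω' = ⊤}.indicator (fun _ => (1 : ℝ))) ω ∂μ
        = q.toReal := by
      rw [integral_indicator (hκtop 0)]
      simp [hq]; rfl
    have h3 : ∫ ω in A, ({ω' | κ n ω' = ⊤}.indicator (fun _ => (1 : ℝ))) ω ∂μ
        = (μ A).toReal * q.toReal := by
      rw [← setIntegral_condExp (ℱ.le (n - 1)) hf_int hA]
      calc ∫ ω in A, (μ[{ω' | κ n ω' = ⊤}.indicator (fun _ => (1 : ℝ)) | ℱ (n - 1)]) ω ∂μ
          = ∫ _ω in A, q.toReal ∂μ := by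
            refine setIntegral_congr_ae hAm ?_
            filter_upwards [hg] with ω hω
            intro _
            rw [hω, h2]
        _ = (μ A).toReal * q.toReal := by simp [mul_comm, Measure.real]
    have := h1.symm.trans h3
    have hfin : μ A * q ≠ ⊤ := ENNReal.mul_ne_top (measure_ne_top μ A) (measure_ne_top μ _)
    apply (ENNReal.toReal_eq_toReal_iff' (measure_ne_top μ _) hfin).mp
    rw [ENNReal.toReal_mul]
    exact this
  -- p + q = 1 and Lemma B
  have hlt_compl : ∀ i : ℕ, {ω | κ i ω < ⊤} = {ω | κ i ω = ⊤}ᶜ := by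
    intro i; ext ω; simp [lt_top_iff_ne_top]
  have hpq : p + q = 1 := by
    rw [hp, hq, hlt_compl 0]
    rw [measure_compl (hκtop 0) (measure_ne_top μ _), measure_univ,
      tsub_add_cancel_of_le prob_le_one]
  have hcondlt : ∀ n : ℕ, 1 ≤ n → ∀ A : Set Ω, MeasurableSet[ℱ (n - 1)] A →
      μ (A ∩ {ω | κ n ω < ⊤}) = μ A * p := by
    intro n hn A hA
    have hAm : MeasurableSet A := ℱ.le _ _ hA
    have hsplit : μ (A ∩ {ω | κ n ω < ⊤}) + μ (A ∩ {ω | κ n ω = ⊤}) = μ A := by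
      rw [hlt_compl n]
      rw [← measure_inter_add_diff A (hκtop n), add_comm]
      rw [diff_eq]
    have h2 : μ A * p + μ A * q = μ A := by
      rw [← mul_add, hpq, mul_one]
    have := hsplit.trans h2.symm
    rw [hcond n hn A hA] at this
    have hqfin : μ A * q ≠ ⊤ := ENNReal.mul_ne_top (measure_ne_top μ A) (measure_ne_top μ _)
    rw [add_comm (μ (A ∩ {ω | κ n ω < ⊤})), add_comm (μ A * p)] at this
    exact (ENNReal.add_right_inj hqfin).mp this
  -- T j stopping-time property: {T j = t} ∈ ℱ t
  have hTeq : ∀ j : ℕ, 1 ≤ j → ∀ t : ℕ, MeasurableSet[ℱ t] {ω | T j ω = (t : ℕ∞)} := by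
    intro j hj
    induction j with
    | zero => omega
    | succ j ih =>
      rcases Nat.eq_or_lt_of_le hj with h1 | h1
      · intro t
        have : {ω | T 1 ω = (t : ℕ∞)} = {ω | κ m ω = (t : ℕ∞)} := by
          ext ω; simp [hT1 ω]
        rw [← h1, this]
        exact hκeq m t
      · have hj1 : 1 ≤ j := by omega
        intro t
        have hunion : {ω | T (j + 1) ω = (t : ℕ∞)}
            = ⋃ s : ℕ, ⋃ (_ : s < t),
              ({ω | T j ω = (s : ℕ∞)} ∩ {ω | κ (s + 1) ω = (t : ℕ∞)}) := by
          ext ω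
          simp only [mem_iUnion, mem_inter_iff, mem_setOf_eq]
          constructor
          · intro h
            rw [hTrec j hj1 ω] at h
            by_cases htop : T j ω = ⊤
            · rw [if_pos htop] at h; simp at h
            · rw [if_neg htop] at h
              refine ⟨(T j ω).toNat, ?_, (ENat.coe_toNat htop).symm, h⟩
              have := (h_i ((T j ω).toNat + 1) ω).trans_eq h
              exact_mod_cast Nat.lt_of_succ_le (by exact_mod_cast this)
          · rintro ⟨s, hst, hTj, hκs⟩
            rw [hTrec j hj1 ω, if_neg (by rw [hTj]; exact (ENat.coe_ne_top s))]
            rw [hTj]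
            simpa using hκs
        rw [hunion]
        refine MeasurableSet.iUnion fun s => MeasurableSet.iUnion fun hst => ?_
        exact (ℱ.mono (le_of_lt hst) _ (ih hj1 s)).inter (hκeq (s + 1) t)
  -- decomposition of {T j < ⊤} into levels
  have hTlt : ∀ j : ℕ, 1 ≤ j → {ω | T j ω < ⊤} = ⋃ s : ℕ, {ω | T j ω = (s : ℕ∞)} := by
    intro j hj
    ext ω
    simp only [mem_setOf_eq, mem_iUnion]
    constructor
    · intro h
      exact ⟨(T j ω).toNat, (ENat.coe_toNat h.ne).symm⟩
    · rintro ⟨s, hs⟩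
      rw [hs]
      exact lt_top_iff_ne_top.mpr (ENat.coe_ne_top s)
  intro k hk
  induction k with
  | zero => omega
  | succ k ih =>
    rcases Nat.eq_or_lt_of_le hk with h1 | h1
    · -- base case : k + 1 = 1
      rw [← h1, pow_one]
      have hset : {ω | T 1 ω < ⊤} = {ω | κ m ω < ⊤} := by
        ext ω; simp [hT1 ω]
      rw [hset]
      rcases Nat.eq_zero_or_pos m with hm | hm
      · subst hm; exact le_of_eq hp.symm
      · have := hcondlt m hm univ MeasurableSet.univ
        rw [univ_inter, measure_univ, one_mul] at this
        exact le_of_eq this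
    · -- inductive step : 1 ≤ k
      have hk1 : 1 ≤ k := by omega
      have hIH := ih hk1
      have hunion : {ω | T (k + 1) ω < ⊤}
          = ⋃ s : ℕ, ({ω | T k ω = (s : ℕ∞)} ∩ {ω | κ (s + 1) ω < ⊤}) := by
        ext ω
        simp only [mem_iUnion, mem_inter_iff, mem_setOf_eq]
        constructor
        · intro h
          rw [hTrec k hk1 ω] at h
          by_cases htop : T k ω = ⊤
          · rw [if_pos htop] at h; simp at h
          · rw [if_neg htop] at h
            exact ⟨(T k ω).toNat, (ENat.coe_toNat htop).symm, h⟩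
        · rintro ⟨s, hTk, hκs⟩
          rw [hTrec k hk1 ω, if_neg (by rw [hTk]; exact ENat.coe_ne_top s), hTk]
          simpa using hκs
      have hmeas1 : ∀ s : ℕ,
          MeasurableSet ({ω | T k ω = (s : ℕ∞)} ∩ {ω | κ (s + 1) ω < ⊤}) := by
        intro s
        refine (ℱ.le s _ (hTeq k hk1 s)).inter ?_
        rw [hlt_compl]
        exact (hκtop (s + 1)).compl
      have hdisj : Pairwise (Function.onFun Disjoint fun s : ℕ =>
          ({ω | T k ω = (s : ℕ∞)} ∩ {ω | κ (s + 1) ω < ⊤})) := by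
        intro a b hab
        refine Set.disjoint_left.mpr ?_
        rintro ω ⟨ha, -⟩ ⟨hb, -⟩
        exact hab (by exact_mod_cast ha.symm.trans hb)
      have hterm : ∀ s : ℕ, μ ({ω | T k ω = (s : ℕ∞)} ∩ {ω | κ (s + 1) ω < ⊤})
          = μ {ω | T k ω = (s : ℕ∞)} * p :=
        fun s => hcondlt (s + 1) (by omega) _ (hTeq k hk1 s)
      have hsum : μ {ω | T k ω < ⊤} = ∑' s : ℕ, μ {ω | T k ω = (s : ℕ∞)} := by
        rw [hTlt k hk1]
        refine measure_iUnion ?_ (fun s => ℱ.le s _ (hTeq k hk1 s))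
        intro a b hab
        refine Set.disjoint_left.mpr ?_
        intro ω ha hb
        exact hab (by exact_mod_cast (Set.mem_setOf_eq ▸ ha).symm.trans hb)
      calc μ {ω | T (k + 1) ω < ⊤}
          = ∑' s : ℕ, μ ({ω | T k ω = (s : ℕ∞)} ∩ {ω | κ (s + 1) ω < ⊤}) := by
            rw [hunion, measure_iUnion hdisj hmeas1]
        _ = ∑' s : ℕ, μ {ω | T k ω = (s : ℕ∞)} * p := tsum_congr hterm
        _ = (∑' s : ℕ, μ {ω | T k ω = (s : ℕ∞)}) * p := ENNReal.tsum_mul_right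
        _ = μ {ω | T k ω < ⊤} * p := by rw [← hsum]
        _ ≤ p ^ k * p := mul_le_mul_left hIH p
        _ = p ^ (k + 1) := (pow_succ p k).symm
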